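/- arXiv:2602.13492 — 2 statements merged into one kernel-verified Lean document; each statement's English description precedes it below -/
import Mathlib

section
/- Product formula for single-column interpolation ASEP polynomials: Let μ ∈ {0,1}ⁿ be a composition with all parts 0 or 1, and let S_μ = {i : μᵢ = 1}. If F ∈ K[x₁,…,xₙ] satisfies the defining conditions of the interpolation ASEP polynomial F*_μ, then F = ∏_{i ∈ S_μ} ( xᵢ − t^{#(S_μᶜ ∩ {1,…,i−1})} / t^{n−1} ), where S_μᶜ is the complement of S_μ in {1,…,n}. -/
open MvPolynomial

noncomputable section

/-- `k = ℚ(t)`, the field of rational functions in `t` over `ℚ`. -/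
abbrev kk : Type := RatFunc ℚ

/-- `K = k(q)`, the field of rational functions in `q` over `k`. -/
abbrev KK : Type := RatFunc kk

/-- The element `t` of `k`. -/
def tk : kk := RatFunc.X

/-- The element `t` of `K`. -/
def tK : KK := RatFunc.C tk

/-- The element `q` of `K`. -/
def qK : KK := RatFunc.X

/-- `kᵢ(μ) = #{j < i : μⱼ > μᵢ} + #{j > i : μⱼ ≥ μᵢ}`. -/
def kStat {n : ℕ} (μ : Fin n → ℕ) (i : Fin n) : ℕ :=
  (Finset.univ.filter (fun j => j < i ∧ μ i < μ j)).card +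
    (Finset.univ.filter (fun j => i < j ∧ μ i ≤ μ j)).card

/-- `μ̄ = (q^{μ₁} t^{−k₁(μ)}, …, q^{μₙ} t^{−kₙ(μ)}) ∈ Kⁿ`. -/
def mubar {n : ℕ} (μ : Fin n → ℕ) : Fin n → KK :=
  fun i => qK ^ (μ i) * tK ^ (-(kStat μ i : ℤ))

/-- `|μ| = μ₁ + ⋯ + μₙ`. -/
def wt {n : ℕ} (μ : Fin n → ℕ) : ℕ := ∑ i, μ i

/-- A partition: a weakly decreasing composition. -/
def IsPartition {n : ℕ} (μ : Fin n → ℕ) : Prop := ∀ i j : Fin n, i ≤ j → μ j ≤ μ i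

/-- The exponent vector of the monomial `x^μ`. -/
def toMono {n : ℕ} (μ : Fin n → ℕ) : Fin n →₀ ℕ := Finsupp.equivFunOnFinite.symm μ

/-- `Sₙ(λ)`: the set of compositions obtained by permuting the entries of `λ`. -/
def permSet {n : ℕ} (lam : Fin n → ℕ) : Finset (Fin n → ℕ) :=
  Finset.image (fun σ : Equiv.Perm (Fin n) => lam ∘ σ) Finset.univ

/-- The defining conditions of the interpolation Macdonald polynomial `P*_λ`. -/
def IsIntMacdonald {n : ℕ} (lam : Fin n → ℕ) (P : MvPolynomial (Fin n) KK) : Prop :=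
  P.IsSymmetric ∧ P.totalDegree ≤ wt lam ∧ P.coeff (toMono lam) = 1 ∧
    ∀ ν : Fin n → ℕ, IsPartition ν → ν ≠ lam → wt ν ≤ wt lam →
      MvPolynomial.eval (mubar ν) P = 0

/-- The defining conditions of the interpolation ASEP polynomial `F*_μ`,
with respect to the partition `λ` (the decreasing rearrangement of `μ`). -/
def IsIntASEP {n : ℕ} (lam μ : Fin n → ℕ) (F : MvPolynomial (Fin n) KK) : Prop :=
  F.totalDegree ≤ wt lam ∧
    (∀ τ ∈ permSet lam, F.coeff (toMono τ) = if τ = μ then 1 else 0) ∧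
    ∀ ν : Fin n → ℕ, wt ν ≤ wt lam → ν ∉ permSet lam →
      MvPolynomial.eval (mubar ν) F = 0

/-- The defining conditions of the nonsymmetric interpolation Macdonald polynomial `E*_μ`. -/
def IsIntE {n : ℕ} (μ : Fin n → ℕ) (E : MvPolynomial (Fin n) KK) : Prop :=
  E.totalDegree ≤ wt μ ∧ E.coeff (toMono μ) = 1 ∧
    ∀ ν : Fin n → ℕ, ν ≠ μ → wt ν ≤ wt μ → MvPolynomial.eval (mubar ν) E = 0

/-- Evaluation of a rational function in `q` at `q = 1` (junk value if not regular there). -/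
def atOne (c : KK) : kk := RatFunc.eval (RingHom.id kk) 1 c

/-- `P` is regular at `q = 1`: the reduced denominator of each coefficient does not
vanish at `q = 1`. -/
def RegAtOne {n : ℕ} (P : MvPolynomial (Fin n) KK) : Prop :=
  ∀ m : Fin n →₀ ℕ, Polynomial.eval (1 : kk) (P.coeff m).denom ≠ 0

/-- Coefficient-wise evaluation of `P` at `q = 1`. -/
def evalq1 {n : ℕ} (P : MvPolynomial (Fin n) KK) : MvPolynomial (Fin n) kk :=
  ∑ m ∈ P.support, monomial m (atOne (P.coeff m))

/-- The interpolation elementary polynomial `e*_{m,ℓ}(x₁,…,xₙ;t)`, with coefficients in `k`. -/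
def estar (n m : ℕ) (ℓ : ℤ) : MvPolynomial (Fin n) kk :=
  ∑ S ∈ Finset.powersetCard m (Finset.univ : Finset (Fin n)),
    ∏ i ∈ S, (X i - C (tk ^ (((Sᶜ.filter (fun j => j < i)).card : ℤ) - ℓ)))

/-- The interpolation elementary polynomial `e*_{m,ℓ}(x₁,…,xₙ;t)`, with coefficients in `K`. -/
def estarK (n m : ℕ) (ℓ : ℤ) : MvPolynomial (Fin n) KK :=
  ∑ S ∈ Finset.powersetCard m (Finset.univ : Finset (Fin n)),
    ∏ i ∈ S, (X i - C (tK ^ (((Sᶜ.filter (fun j => j < i)).card : ℤ) - ℓ)))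

/-- The conjugate partition: `λ′ᵢ = #{j : λⱼ ≥ i}`. -/
def conjP {n : ℕ} (lam : Fin n → ℕ) (i : ℕ) : ℕ :=
  (Finset.univ.filter (fun j => i ≤ lam j)).card


section Aux

lemma card_filter_val_lt {n m : ℕ} (h : m ≤ n) :
    (Finset.univ.filter fun i : Fin n => (i:ℕ) < m).card = m := by
  rw [Finset.card_filter]
  rw [Fin.sum_univ_eq_sum_range (fun i => if i < m then 1 else 0)]
  rw [← Finset.card_filter]
  have : (Finset.range n).filter (fun i => i < m) = Finset.range m := by
    ext x; simp only [Finset.mem_filter, Finset.mem_range]; omega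
  rw [this, Finset.card_range]

lemma prod_X_eq_monomial {σ R : Type*} [CommSemiring R] [DecidableEq σ] (T : Finset σ) :
    ∏ i ∈ T, (X i : MvPolynomial σ R) = monomial (∑ i ∈ T, Finsupp.single i 1) 1 := by
  induction T using Finset.cons_induction with
  | empty => simp
  | cons a s ha ih =>
    rw [Finset.prod_cons, ih, Finset.sum_cons, X, monomial_mul, one_mul]

-- permSet characterization (forward and backward)
lemma permSet_char {n : ℕ} (m : ℕ) (hmn : m ≤ n) (ν : Fin n → ℕ) :
    (ν ∈ Finset.image (fun σ : Equiv.Perm (Fin n) =>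
        (fun i : Fin n => if (i:ℕ) < m then 1 else 0) ∘ σ) Finset.univ) ↔
      ((∀ i, ν i ≤ 1) ∧ (Finset.univ.filter fun i => ν i = 1).card = m) := by
  classical
  constructor
  · rintro h
    rw [Finset.mem_image] at h
    obtain ⟨σ, -, rfl⟩ := h
    constructor
    · intro i; simp only [Function.comp_apply]; split <;> omega
    · rw [Finset.card_filter]
      simp only [Function.comp_apply]
      rw [Fintype.sum_equiv σ
        (fun i => if (if ((σ i : Fin n):ℕ) < m then 1 else 0) = (1:ℕ) then (1:ℕ) else 0)
        (fun i => if (if (i:ℕ) < m then 1 else 0) = (1:ℕ) then (1:ℕ) else 0)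
        (fun i => rfl)]
      rw [← Finset.card_filter]
      have : (Finset.univ.filter fun i : Fin n => (if (i:ℕ) < m then 1 else 0) = 1)
          = Finset.univ.filter fun i : Fin n => (i:ℕ) < m := by
        ext i; simp only [Finset.mem_filter]; constructor
        · rintro ⟨h1, h2⟩; refine ⟨h1, ?_⟩; by_contra hc; simp [hc] at h2
        · rintro ⟨h1, h2⟩; exact ⟨h1, by simp [h2]⟩
      rw [this, card_filter_val_lt hmn]
  · rintro ⟨h1, h2⟩
    set p : Fin n → Prop := fun x => ν x = 1 with hp
    set q : Fin n → Prop := fun x => (if (x:ℕ) < m then 1 else 0 : ℕ) = 1 with hq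
    have hcards : Fintype.card {x // p x} = Fintype.card {x // q x} := by
      rw [Fintype.card_subtype, Fintype.card_subtype, h2]
      have : (Finset.univ.filter fun i : Fin n => q i)
          = Finset.univ.filter fun i : Fin n => (i:ℕ) < m := by
        ext i; simp only [Finset.mem_filter, hq]; constructor
        · rintro ⟨ha, hb⟩; refine ⟨ha, ?_⟩; by_contra hc; simp [hc] at hb
        · rintro ⟨ha, hb⟩; exact ⟨ha, by simp [hb]⟩
      rw [this, card_filter_val_lt hmn]
    have hcards' : Fintype.card {x // ¬ p x} = Fintype.card {x // ¬ q x} := by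
      rw [Fintype.card_subtype_compl, Fintype.card_subtype_compl, hcards]
    set σ : Equiv.Perm (Fin n) :=
      Equiv.subtypeCongr (Fintype.equivOfCardEq hcards) (Fintype.equivOfCardEq hcards') with hσ
    have key : ∀ i, (if ((σ i : Fin n):ℕ) < m then 1 else 0) = ν i := by
      intro i
      by_cases hi : p i
      · have : q (σ i) := by
          rw [hσ, Equiv.subtypeCongr]
          simp only [Equiv.trans_apply, Equiv.sumCompl_symm_apply_of_pos hi,
            Equiv.sumCongr_apply, Sum.map_inl, Equiv.sumCompl_apply_inl]
          exact (Fintype.equivOfCardEq hcards ⟨i, hi⟩).2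
        rw [hq] at this
        rw [this, hp] at *
        exact hi.symm
      · have : ¬ q (σ i) := by
          rw [hσ, Equiv.subtypeCongr]
          simp only [Equiv.trans_apply, Equiv.sumCompl_symm_apply_of_neg hi,
            Equiv.sumCongr_apply, Sum.map_inr, Equiv.sumCompl_apply_inr]
          exact (Fintype.equivOfCardEq hcards' ⟨i, hi⟩).2
        rw [hq] at this
        have h0 : (if ((σ i : Fin n):ℕ) < m then 1 else 0 : ℕ) = 0 := by
          by_contra hc
          apply this
          split at hc <;> simp_all
        have hνi : ν i = 0 := by have := h1 i; rw [hp] at hi; omega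
        rw [h0, hνi]
    rw [Finset.mem_image]
    exact ⟨σ, Finset.mem_univ σ, funext fun i => key i⟩

def cnt {n : ℕ} (X : Finset (Fin n)) (x : ℕ) : ℕ := (X.filter (fun j => j.val < x)).card

lemma cnt_zero {n : ℕ} (X : Finset (Fin n)) : cnt X 0 = 0 := by
  simp [cnt]

lemma cnt_top {n : ℕ} (X : Finset (Fin n)) : cnt X n = X.card := by
  unfold cnt
  congr 1
  apply Finset.filter_true_of_mem
  intro j _; exact j.2

lemma cnt_succ {n : ℕ} (X : Finset (Fin n)) (x : ℕ) (hx : x < n) :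
    cnt X (x+1) = cnt X x + (if (⟨x, hx⟩ : Fin n) ∈ X then 1 else 0) := by
  classical
  unfold cnt
  have hsplit : X.filter (fun j => j.val < x+1)
      = X.filter (fun j => j.val < x) ∪ X.filter (fun j => j.val = x) := by
    ext j
    simp only [Finset.mem_filter, Finset.mem_union]
    by_cases hj : j ∈ X
    · simp only [hj, true_and]; omega
    · simp [hj]
  have hdisj : Disjoint (X.filter (fun j => j.val < x)) (X.filter (fun j => j.val = x)) := by
    rw [Finset.disjoint_left]
    intro j hj hj'
    rw [Finset.mem_filter] at hj hj'
    omega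
  rw [hsplit, Finset.card_union_of_disjoint hdisj]
  congr 1
  by_cases hmem : (⟨x, hx⟩ : Fin n) ∈ X
  · rw [if_pos hmem]
    have : X.filter (fun j => j.val = x) = {(⟨x, hx⟩ : Fin n)} := by
      ext j
      simp only [Finset.mem_filter, Finset.mem_singleton]
      constructor
      · rintro ⟨-, hj⟩; exact Fin.ext hj
      · rintro rfl; exact ⟨hmem, rfl⟩
    rw [this, Finset.card_singleton]
  · rw [if_neg hmem]
    have : X.filter (fun j => j.val = x) = ∅ := by
      ext j
      simp only [Finset.mem_filter, Finset.notMem_empty, iff_false, not_and]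
      intro hj hjx
      exact hmem (by rwa [show (⟨x, hx⟩ : Fin n) = j from (Fin.ext hjx.symm)])
    rw [this, Finset.card_empty]

lemma exists_balanced {n : ℕ} (S A : Finset (Fin n)) (h : A.card < S.card) :
    ∃ i, i ∈ S ∧ i ∉ A ∧ (S.filter (fun j => j < i)).card = (A.filter (fun j => j < i)).card := by
  classical
  have hn : 0 < n := by
    obtain ⟨i, -⟩ := Finset.card_pos.mp (show 0 < S.card by omega)
    exact i.pos
  set P : ℕ → Prop := fun x => cnt S x ≤ cnt A x with hP
  have hP0 : P 0 := by rw [hP]; simp [cnt_zero]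
  obtain ⟨i0, hi0⟩ : ∃ i0, i0 = Nat.findGreatest P (n-1) := ⟨_, rfl⟩
  have hi0le : i0 ≤ n - 1 := hi0 ▸ Nat.findGreatest_le _
  have hi0n : i0 < n := by omega
  have hPi0 : P i0 := by rw [hi0]; exact Nat.findGreatest_spec (Nat.zero_le _) hP0
  have hnext : ¬ P (i0 + 1) := by
    by_cases hc : i0 = n - 1
    · intro hcon
      rw [hP] at hcon
      rw [hc] at hcon
      have heq : n - 1 + 1 = n := by omega
      rw [heq, cnt_top, cnt_top] at hcon
      omega
    · exact Nat.findGreatest_is_greatest (k := i0+1) (n := n-1) (by omega) (by omega)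
  have hstepS := cnt_succ S i0 hi0n
  have hstepA := cnt_succ A i0 hi0n
  rw [hP] at hPi0 hnext
  refine ⟨⟨i0, hi0n⟩, ?_, ?_, ?_⟩
  · by_contra hc
    rw [if_neg hc] at hstepS
    split at hstepA <;> omega
  · intro hc
    rw [if_pos hc] at hstepA
    split at hstepS <;> omega
  · have heq : cnt S i0 = cnt A i0 := by
      split at hstepS <;> split at hstepA <;> omega
    have h1 : S.filter (fun j => j < (⟨i0, hi0n⟩ : Fin n)) = S.filter (fun j => j.val < i0) := by
      apply Finset.filter_congr; intro j _; simp [Fin.lt_def]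
    have h2 : A.filter (fun j => j < (⟨i0, hi0n⟩ : Fin n)) = A.filter (fun j => j.val < i0) := by
      apply Finset.filter_congr; intro j _; simp [Fin.lt_def]
    rw [h1, h2]
    exact heq

lemma tk_ne_zero : tk ≠ 0 := RatFunc.X_ne_zero

lemma prod_mubar_pow {n : ℕ} (f g : Fin n → ℕ) :
    ∏ i, mubar f i ^ g i =
      (algebraMap (Polynomial kk) KK)
        (Polynomial.C ((tk⁻¹) ^ (∑ i, kStat f i * g i)) * Polynomial.X ^ (∑ i, f i * g i)) := by
  have hmu : ∀ i, mubar f i = qK ^ (f i) * (tK⁻¹) ^ (kStat f i) := by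
    intro i
    rw [mubar, zpow_neg, zpow_natCast, inv_pow]
  simp only [hmu, mul_pow, ← pow_mul]
  rw [Finset.prod_mul_distrib, Finset.prod_pow_eq_pow_sum, Finset.prod_pow_eq_pow_sum]
  simp only [map_mul, map_pow, RatFunc.algebraMap_C, RatFunc.algebraMap_X, map_inv₀]
  show qK ^ _ * (tK)⁻¹ ^ _ = (tK)⁻¹ ^ _ * qK ^ _
  ring

-- the quadratic inequality
lemma dot_le {n : ℕ} (u v : Fin n →₀ ℕ) :
    2 * ((∑ i, u i * v i : ℕ) : ℤ) ≤ (∑ i, u i * u i : ℕ) + (∑ i, v i * v i : ℕ) := by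
  push_cast
  rw [← sub_nonneg]
  have : ((∑ i, (u i : ℤ) * u i) + ∑ i, (v i : ℤ) * v i) - 2 * ∑ i, (u i : ℤ) * v i
      = ∑ i, ((u i : ℤ) - v i)^2 := by
    rw [Finset.mul_sum, ← Finset.sum_add_distrib, ← Finset.sum_sub_distrib]
    congr 1; funext i; ring
  rw [this]
  exact Finset.sum_nonneg fun i _ => sq_nonneg _

lemma dot_eq_iff {n : ℕ} (u v : Fin n →₀ ℕ) 
    (h : 2 * ((∑ i, u i * v i : ℕ) : ℤ) = (∑ i, u i * u i : ℕ) + (∑ i, v i * v i : ℕ)) :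
    u = v := by
  have : ∑ i, ((u i : ℤ) - v i)^2 = 0 := by
    push_cast at h ⊢
    rw [Finset.sum_congr rfl (fun i _ => by ring : ∀ i ∈ Finset.univ, ((u i:ℤ) - v i)^2 = (u i:ℤ)*u i + (v i:ℤ)*v i - 2*((u i:ℤ)*(v i:ℤ)))]
    rw [Finset.sum_sub_distrib, Finset.sum_add_distrib, ← Finset.mul_sum]
    omega
  have h2 := (Finset.sum_eq_zero_iff_of_nonneg (fun i _ => sq_nonneg ((u i:ℤ) - v i))).mp this
  ext i
  have := h2 i (Finset.mem_univ i)
  have : (u i : ℤ) = v i := by nlinarith [this]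
  exact_mod_cast this

lemma det_eval_ne_zero {n : ℕ} (T : Finset (Fin n →₀ ℕ)) :
    (Matrix.of fun d e : ↥T => ∏ i, mubar (d : Fin n →₀ ℕ) i ^ ((e : Fin n →₀ ℕ) i)).det ≠ 0 := by
  classical
  set A : (Fin n →₀ ℕ) → (Fin n →₀ ℕ) → ℕ := fun d e => ∑ i, d i * e i with hA
  set B : (Fin n →₀ ℕ) → (Fin n →₀ ℕ) → ℕ := fun d e => ∑ i, kStat (⇑d) i * e i with hB
  set N : Matrix ↥T ↥T (Polynomial kk) := Matrix.of fun d e : ↥T =>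
    Polynomial.C ((tk⁻¹) ^ (B d e)) * Polynomial.X ^ (A d e) with hN
  have hmap : (Matrix.of fun d e : ↥T => ∏ i, mubar (d : Fin n →₀ ℕ) i ^ ((e : Fin n →₀ ℕ) i))
      = (algebraMap (Polynomial kk) KK).mapMatrix N := by
    ext d e
    simp only [RingHom.mapMatrix_apply, Matrix.map_apply, Matrix.of_apply, hN, hA, hB]
    exact prod_mubar_pow (⇑(d : Fin n →₀ ℕ)) (⇑(e : Fin n →₀ ℕ))
  rw [hmap, ← RingHom.map_det]
  intro hcon
  have hNdet : N.det = 0 := by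
    have := RatFunc.algebraMap_injective kk
    exact this (by simpa using hcon)
  -- show coefficient at D is nonzero
  set D : ℕ := ∑ d : ↥T, A d d with hD
  have hcoeff : N.det.coeff D = (tk⁻¹) ^ (∑ d : ↥T, B d d) := by
    rw [Matrix.det_apply]
    rw [Polynomial.finset_sum_coeff]
    rw [Finset.sum_eq_single (1 : Equiv.Perm ↥T)]
    · simp only [Equiv.Perm.sign_one, one_smul, Equiv.Perm.one_apply]
      have : (∏ d : ↥T, N d d) = Polynomial.C ((tk⁻¹) ^ (∑ d : ↥T, B d d)) * Polynomial.X ^ D := by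
        rw [hN]
        simp only [Matrix.of_apply]
        rw [Finset.prod_mul_distrib, ← map_prod, Finset.prod_pow_eq_pow_sum,
          Finset.prod_pow_eq_pow_sum]
      rw [this]
      simp [Polynomial.coeff_C_mul, Polynomial.coeff_X_pow]
    · intro σ _ hσ1
      have hprod : (∏ d : ↥T, N (σ d) d)
          = Polynomial.C ((tk⁻¹) ^ (∑ d : ↥T, B (σ d) d)) * Polynomial.X ^ (∑ d : ↥T, A (σ d) d) := by
        rw [hN]
        simp only [Matrix.of_apply]
        rw [Finset.prod_mul_distrib, ← map_prod, Finset.prod_pow_eq_pow_sum,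
          Finset.prod_pow_eq_pow_sum]
      have hne : (∑ d : ↥T, A (σ d) d) ≠ D := by
        intro heq
        apply hσ1
        have hslack : ∀ d : ↥T, (0:ℤ) ≤ (A (σ d) (σ d) : ℤ) + (A d d : ℤ) - 2 * (A (σ d) d : ℤ) := by
          intro d
          have := dot_le (↑(σ d) : Fin n →₀ ℕ) (↑d : Fin n →₀ ℕ)
          simp only [hA]
          omega
        have hreidx : ∑ d : ↥T, (A (σ d) (σ d) : ℤ) = ∑ d : ↥T, (A d d : ℤ) :=
          Fintype.sum_equiv σ _ _ (fun d => rfl)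
        have hsumz : ∑ d : ↥T, ((A (σ d) (σ d) : ℤ) + (A d d : ℤ) - 2 * (A (σ d) d : ℤ)) = 0 := by
          rw [Finset.sum_sub_distrib, Finset.sum_add_distrib, hreidx, ← Finset.mul_sum]
          have h1 : ∑ d : ↥T, (A (σ d) d : ℤ) = (D : ℤ) := by
            rw [← heq]; push_cast; rfl
          have h2 : ∑ d : ↥T, (A d d : ℤ) = (D : ℤ) := by
            rw [hD]; push_cast; rfl
          rw [h1, h2]; ring
        have heach := (Finset.sum_eq_zero_iff_of_nonneg
          (fun d _ => hslack d)).mp hsumz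
        ext d
        have hd := heach d (Finset.mem_univ d)
        have : ((↑(σ d) : Fin n →₀ ℕ)) = (↑d : Fin n →₀ ℕ) := by
          apply dot_eq_iff
          simp only [hA] at hd
          omega
        simp [Subtype.ext this]
      rw [hprod]
      rw [Polynomial.coeff_smul, Polynomial.coeff_C_mul, Polynomial.coeff_X_pow,
        if_neg (fun h => hne h.symm)]
      simp
    · intro h; exact absurd (Finset.mem_univ _) h
  rw [hNdet] at hcoeff
  simp only [Polynomial.coeff_zero] at hcoeff
  exact (pow_ne_zero _ (inv_ne_zero tk_ne_zero)) hcoeff.symm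

lemma eval_support_zero {n : ℕ} (H : MvPolynomial (Fin n) KK)
    (h : ∀ d ∈ H.support, MvPolynomial.eval (mubar ⇑d) H = 0) : H = 0 := by
  classical
  by_contra hne
  set T := H.support with hT
  have hdet := det_eval_ne_zero T
  have hv : (Matrix.of fun d e : ↥T =>
      ∏ i, mubar (⇑(d : Fin n →₀ ℕ)) i ^ ((e : Fin n →₀ ℕ) i)).mulVec
      (fun e : ↥T => H.coeff e) = 0 := by
    funext d
    have h0 := h d d.2
    rw [eval_eq'] at h0
    simp only [Matrix.mulVec, dotProduct, Matrix.of_apply, Pi.zero_apply]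
    rw [Finset.univ_eq_attach, Finset.sum_attach T
      (fun e => (∏ i, mubar (⇑(d : Fin n →₀ ℕ)) i ^ (e i)) * H.coeff e)]
    rw [← h0]
    exact Finset.sum_congr rfl fun e _ => mul_comm _ _
  have hz := Matrix.eq_zero_of_mulVec_eq_zero hdet hv
  obtain ⟨d, hd⟩ := MvPolynomial.support_nonempty.mpr hne
  have := congrFun hz ⟨d, hd⟩
  simp only [Pi.zero_apply] at this
  exact (MvPolynomial.mem_support_iff.mp hd) this


lemma eval_G_zero {n : ℕ} (μ : Fin n → ℕ)
    (ν : Fin n → ℕ)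
    (hwt : wt ν ≤ (Finset.univ.filter (fun j => μ j = 1)).card)
    (hnot : ν ∉ permSet (fun i : Fin n =>
      if (i:ℕ) < (Finset.univ.filter (fun j => μ j = 1)).card then 1 else 0)) :
    MvPolynomial.eval (mubar ν) (∏ i ∈ Finset.univ.filter (fun j => μ j = 1),
      (X i - C (tK ^
        (((((Finset.univ.filter (fun j => μ j = 1))ᶜ).filter (fun j => j < i)).card : ℤ)
          - ((n : ℤ) - 1)))) : MvPolynomial (Fin n) KK) = 0 := by
  classical
  set S : Finset (Fin n) := Finset.univ.filter (fun j => μ j = 1) with hS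
  set m : ℕ := S.card with hm
  have hmn : m ≤ n := by
    rw [hm]
    calc S.card ≤ (Finset.univ : Finset (Fin n)).card := Finset.card_le_univ S
    _ = n := by simp
  set A : Finset (Fin n) := Finset.univ.filter (fun j => 1 ≤ ν j) with hA
  have hAle : A.card ≤ wt ν := by
    calc A.card = ∑ i ∈ A, 1 := (Finset.card_eq_sum_ones A)
    _ ≤ ∑ i ∈ A, ν i := Finset.sum_le_sum (fun i hi => by
        rw [hA, Finset.mem_filter] at hi; exact hi.2)
    _ ≤ ∑ i, ν i := Finset.sum_le_sum_of_subset (Finset.subset_univ A)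
    _ = wt ν := rfl
  have hAlt : A.card < m := by
    rcases Nat.lt_or_ge A.card m with h | h
    · exact h
    · exfalso
      apply hnot
      have hcardA : A.card = m := le_antisymm (hAle.trans hwt) h
      have hν1 : ∀ i, ν i ≤ 1 := by
        intro i
        by_contra hc
        have hiA : i ∈ A := by rw [hA, Finset.mem_filter]; exact ⟨Finset.mem_univ i, by omega⟩
        have hlt : ∑ j ∈ A, 1 < ∑ j ∈ A, ν j :=
          Finset.sum_lt_sum (fun j hj => by rw [hA, Finset.mem_filter] at hj; exact hj.2)
            ⟨i, hiA, by omega⟩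
        rw [← Finset.card_eq_sum_ones A] at hlt
        have : ∑ j ∈ A, ν j ≤ wt ν := Finset.sum_le_sum_of_subset (Finset.subset_univ A)
        omega
      have hAeq : Finset.univ.filter (fun i => ν i = 1) = A := by
        ext i
        rw [hA, Finset.mem_filter, Finset.mem_filter]
        have := hν1 i
        constructor
        · rintro ⟨h1, h2⟩; exact ⟨h1, by omega⟩
        · rintro ⟨h1, h2⟩; exact ⟨h1, by omega⟩
      show ν ∈ Finset.image _ Finset.univ
      rw [permSet_char m hmn ν]
      exact ⟨hν1, by rw [hAeq, hcardA]⟩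
  obtain ⟨i, hiS, hiA, hbal⟩ := exists_balanced S A hAlt
  rw [map_prod]
  apply Finset.prod_eq_zero hiS
  rw [map_sub, eval_X, eval_C, sub_eq_zero]
  have hνi : ν i = 0 := by
    by_contra hc
    exact hiA (by rw [hA, Finset.mem_filter]; exact ⟨Finset.mem_univ i, by omega⟩)
  show qK ^ (ν i) * tK ^ (-(kStat ν i : ℤ)) = _
  rw [hνi, pow_zero, one_mul]
  congr 1
  -- compute kStat ν i
  have h1 : Finset.univ.filter (fun j => j < i ∧ ν i < ν j) = A.filter (fun j => j < i) := by
    ext j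
    rw [Finset.mem_filter, Finset.mem_filter, hA, Finset.mem_filter, hνi]
    constructor
    · rintro ⟨h1, h2, h3⟩; exact ⟨⟨h1, by omega⟩, h2⟩
    · rintro ⟨⟨h1, h2⟩, h3⟩; exact ⟨h1, h3, by omega⟩
  have h2 : Finset.univ.filter (fun j => i < j ∧ ν i ≤ ν j) = Finset.Ioi i := by
    ext j
    rw [Finset.mem_filter, Finset.mem_Ioi, hνi]
    constructor
    · rintro ⟨-, h2, -⟩; exact h2
    · intro h; exact ⟨Finset.mem_univ j, h, by omega⟩
  have hkstat : kStat ν i = (A.filter (fun j => j < i)).card + (n - 1 - (i:ℕ)) := by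
    rw [kStat, h1, h2, Fin.card_Ioi]
  have hpart : (S.filter (fun j => j < i)).card + ((Sᶜ).filter (fun j => j < i)).card
      = (i : ℕ) := by
    have e1 : (Finset.univ.filter (fun j => j < i)).filter (fun j => j ∈ S)
        = S.filter (fun j => j < i) := by
      ext j
      simp only [Finset.mem_filter, Finset.mem_univ, true_and]
      exact and_comm
    have e2 : (Finset.univ.filter (fun j => j < i)).filter (fun j => ¬ (j ∈ S))
        = (Sᶜ).filter (fun j => j < i) := by
      ext j
      simp only [Finset.mem_filter, Finset.mem_univ, true_and, Finset.mem_compl]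
      exact and_comm
    have e3 := Finset.card_filter_add_card_filter_not
      (s := Finset.univ.filter (fun j => j < i)) (p := fun j => j ∈ S)
    rw [e1, e2] at e3
    have e4 : Finset.univ.filter (fun j => j < i) = Finset.Iio i := by
      ext j; simp
    rw [e4, Fin.card_Iio] at e3
    exact e3
  have hin : (i : ℕ) < n := i.2
  rw [hkstat, ← hbal]
  omega

lemma totalDegree_G_le {n : ℕ} (μ : Fin n → ℕ) :
    (∏ i ∈ Finset.univ.filter (fun j => μ j = 1),
      (X i - C (tK ^
        (((((Finset.univ.filter (fun j => μ j = 1))ᶜ).filter (fun j => j < i)).card : ℤ)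
          - ((n : ℤ) - 1)))) : MvPolynomial (Fin n) KK).totalDegree
      ≤ (Finset.univ.filter (fun j => μ j = 1)).card := by
  classical
  refine le_trans (totalDegree_finset_prod _ _) ?_
  rw [Finset.card_eq_sum_ones]
  apply Finset.sum_le_sum
  intro i _
  refine le_trans (totalDegree_sub _ _) ?_
  rw [totalDegree_X, totalDegree_C]
  omega

lemma coeff_G {n : ℕ} (μ : Fin n → ℕ) (hμ : ∀ i, μ i ≤ 1) (τ : Fin n → ℕ)
    (hτ : τ ∈ permSet (fun i : Fin n =>
      if (i:ℕ) < (Finset.univ.filter (fun j => μ j = 1)).card then 1 else 0)) :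
    MvPolynomial.coeff (toMono τ) (∏ i ∈ Finset.univ.filter (fun j => μ j = 1),
      (X i - C (tK ^
        (((((Finset.univ.filter (fun j => μ j = 1))ᶜ).filter (fun j => j < i)).card : ℤ)
          - ((n : ℤ) - 1)))) : MvPolynomial (Fin n) KK)
      = if τ = μ then 1 else 0 := by
  classical
  set S : Finset (Fin n) := Finset.univ.filter (fun j => μ j = 1) with hS
  set m : ℕ := S.card with hm
  have hmn : m ≤ n := by
    rw [hm]
    calc S.card ≤ (Finset.univ : Finset (Fin n)).card := Finset.card_le_univ S
    _ = n := by simp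
  have hτchar := (permSet_char m hmn τ).mp hτ
  obtain ⟨hτ1, hτcard⟩ := hτchar
  set c : Fin n → KK := fun i => tK ^
    ((((Sᶜ).filter (fun j => j < i)).card : ℤ) - ((n : ℤ) - 1)) with hc
  have hGexp : (∏ i ∈ S, (X i - C (c i)) : MvPolynomial (Fin n) KK)
      = ∑ T ∈ S.powerset,
          C (∏ i ∈ S \ T, (-(c i))) * monomial (∑ i ∈ T, Finsupp.single i 1) 1 := by
    have hstep : ∀ i ∈ S, (X i - C (c i) : MvPolynomial (Fin n) KK)
        = X i + C (-(c i)) := fun i _ => by rw [map_neg, sub_eq_add_neg]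
    rw [Finset.prod_congr rfl hstep, Finset.prod_add]
    refine Finset.sum_congr rfl fun T hT => ?_
    rw [prod_X_eq_monomial, ← map_prod, mul_comm]
  rw [hGexp, MvPolynomial.coeff_sum]
  set Aτ : Finset (Fin n) := Finset.univ.filter (fun i => τ i = 1) with hAτ
  have hkey : ∀ T ∈ S.powerset,
      ((∑ i ∈ T, Finsupp.single i 1 : Fin n →₀ ℕ) = toMono τ) ↔ T = Aτ := by
    intro T _
    have happ : ∀ j, (∑ i ∈ T, Finsupp.single i 1 : Fin n →₀ ℕ) j
        = if j ∈ T then 1 else 0 := by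
      intro j
      rw [Finset.sum_apply']
      rw [Finset.sum_congr rfl (fun i _ => Finsupp.single_apply)]
      exact Finset.sum_ite_eq' T j (fun _ => 1)
    constructor
    · intro heq
      ext j
      rw [hAτ, Finset.mem_filter]
      have := congrArg (fun f : Fin n →₀ ℕ => f j) heq
      simp only [toMono, Finsupp.equivFunOnFinite_symm_apply_apply] at this
      rw [happ j] at this
      constructor
      · intro hj; rw [if_pos hj] at this; exact ⟨Finset.mem_univ j, this.symm⟩
      · rintro ⟨-, hj⟩; by_contra hc'; rw [if_neg hc'] at this; omega
    · rintro rfl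
      ext j
      rw [happ j]
      simp only [toMono, Finsupp.equivFunOnFinite_symm_apply_apply]
      rw [hAτ]
      by_cases hj : τ j = 1
      · rw [if_pos (by rw [Finset.mem_filter]; exact ⟨Finset.mem_univ j, hj⟩), hj]
      · rw [if_neg (by rw [Finset.mem_filter]; tauto)]
        have := hτ1 j
        omega
  have hterm : ∀ T ∈ S.powerset,
      MvPolynomial.coeff (toMono τ)
        (C (∏ i ∈ S \ T, (-(c i))) * monomial (∑ i ∈ T, Finsupp.single i 1) 1)
      = if T = Aτ then ∏ i ∈ S \ T, (-(c i)) else 0 := by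
    intro T hT
    rw [MvPolynomial.coeff_C_mul, MvPolynomial.coeff_monomial]
    rw [if_congr (hkey T hT) rfl rfl]
    split <;> simp
  rw [Finset.sum_congr rfl hterm, Finset.sum_ite_eq' S.powerset Aτ
    (fun T => ∏ i ∈ S \ T, (-(c i)))]
  by_cases hcase : τ = μ
  · have hAS : Aτ = S := by
      rw [hAτ, hS, hcase]
    rw [if_pos hcase, if_pos (by rw [hAS]; exact Finset.mem_powerset_self S)]
    rw [hAS, Finset.sdiff_self, Finset.prod_empty]
  · rw [if_neg hcase, if_neg ?_]
    intro hmem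
    rw [Finset.mem_powerset] at hmem
    have hcard : Aτ.card = S.card := by rw [← hm, ← hτcard, hAτ]
    have hAS : Aτ = S := Finset.eq_of_subset_of_card_le hmem (le_of_eq hcard.symm)
    apply hcase
    funext i
    have h1 := hτ1 i
    have h2 := hμ i
    have : (τ i = 1) ↔ (μ i = 1) := by
      rw [show (τ i = 1) ↔ i ∈ Aτ by
          rw [hAτ, Finset.mem_filter]
          exact ⟨fun h => ⟨Finset.mem_univ i, h⟩, fun h => h.2⟩,
        show (μ i = 1) ↔ i ∈ S by
          rw [hS, Finset.mem_filter]
          exact ⟨fun h => ⟨Finset.mem_univ i, h⟩, fun h => h.2⟩, hAS]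
    omega

end Aux

/-- Product formula for single-column interpolation ASEP polynomials. -/
theorem interpolation_asep_single_column (n : ℕ) (hn : 0 < n)
    (μ : Fin n → ℕ) (hμ : ∀ i, μ i ≤ 1)
    (F : MvPolynomial (Fin n) KK)
    (hF : IsIntASEP
      (fun i : Fin n =>
        if (i : ℕ) < (Finset.univ.filter (fun j => μ j = 1)).card then 1 else 0)
      μ F) :
    F = ∏ i ∈ Finset.univ.filter (fun j => μ j = 1),
      (X i - C (tK ^
        (((((Finset.univ.filter (fun j => μ j = 1))ᶜ).filter (fun j => j < i)).card : ℤ)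
          - ((n : ℤ) - 1)))) := by
  classical
  set S : Finset (Fin n) := Finset.univ.filter (fun j => μ j = 1) with hS
  set m : ℕ := S.card with hm
  set lam : Fin n → ℕ := fun i : Fin n => if (i : ℕ) < m then 1 else 0 with hlam
  set G : MvPolynomial (Fin n) KK := ∏ i ∈ S,
      (X i - C (tK ^
        ((((Sᶜ).filter (fun j => j < i)).card : ℤ) - ((n : ℤ) - 1)))) with hG
  obtain ⟨hdeg, hcoeff, hvan⟩ := hF
  have hmn : m ≤ n := by
    rw [hm]
    calc S.card ≤ (Finset.univ : Finset (Fin n)).card := Finset.card_le_univ S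
    _ = n := by simp
  have hwtlam : wt lam = m := by
    rw [wt, hlam]
    rw [show (∑ i : Fin n, if (i : ℕ) < m then 1 else 0)
      = (Finset.univ.filter fun i : Fin n => (i:ℕ) < m).card from (Finset.card_filter _ _).symm]
    exact card_filter_val_lt hmn
  have hHzero : F - G = 0 := by
    apply eval_support_zero
    intro d hd
    have hdsum : (d.sum fun _ e => e) ≤ m := by
      refine le_trans (MvPolynomial.le_totalDegree hd) ?_
      refine le_trans (totalDegree_sub F G) ?_
      rw [max_le_iff]
      exact ⟨by rw [← hwtlam] at *; exact hdeg, totalDegree_G_le μ⟩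
    have hwtd : wt (⇑d) ≤ m := by
      have heq : (d.sum fun _ e => e) = ∑ i, d i := Finsupp.sum_fintype _ _ (fun _ => rfl)
      rw [wt, ← heq]
      exact hdsum
    have htoMono : toMono (⇑d) = d := Finsupp.equivFunOnFinite_symm_coe d
    by_cases hperm : (⇑d : Fin n → ℕ) ∈ permSet lam
    · exfalso
      apply MvPolynomial.mem_support_iff.mp hd
      rw [MvPolynomial.coeff_sub]
      have hcF := hcoeff (⇑d) hperm
      rw [htoMono] at hcF
      have hcG := coeff_G μ hμ (⇑d) hperm
      rw [htoMono] at hcG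
      rw [hcF, hcG, sub_self]
    · rw [map_sub]
      rw [hvan (⇑d) (by rw [hwtlam]; exact hwtd) hperm]
      rw [eval_G_zero μ (⇑d) hwtd hperm]
      simp
  have := sub_eq_zero.mp hHzero
  exact this
end
end

section
/- Knop–Sahi recurrence: Let μ ∈ ℕⁿ be a composition and let μ̂ = (μₙ + 1, μ₁, …, μ_{n−1}). Suppose E satisfies the defining conditions of the nonsymmetric interpolation Macdonald polynomial E*_μ and E′ satisfies the defining conditions of E*_{μ̂}. Then E′(x₁,…,xₙ) = (x₁ − 1/t^{n−1}) · q^{μₙ} · E(x₂, x₃, …, xₙ, x₁/q), where the right-hand side denotes the polynomial obtained from E by the substitution xᵢ ↦ x_{i+1} for 1 ≤ i ≤ n−1 and xₙ ↦ q^{−1}·x₁. -/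
open MvPolynomial

noncomputable section

/-! ### Auxiliary lemmas -/

section Aux

lemma qK_ne_zero : qK ≠ 0 := RatFunc.X_ne_zero
lemma tK_ne_zero : tK ≠ 0 := by simp [tK, tk, RatFunc.X_ne_zero]

lemma tK_zpow (z : ℤ) : tK ^ z = RatFunc.C (tk ^ z) := (map_zpow₀ (RatFunc.C : kk →+* KK) tk z).symm

lemma qpow_t_ne (a : ℕ) (z w : ℤ) (ha : 1 ≤ a) : qK ^ a * tK ^ z ≠ tK ^ w := by
  intro h
  rw [tK_zpow, tK_zpow] at h
  have hq : qK = algebraMap (Polynomial kk) KK Polynomial.X := (RatFunc.algebraMap_X).symm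
  have hC : ∀ c : kk, RatFunc.C c = algebraMap (Polynomial kk) KK (Polynomial.C c) :=
    fun c => (RatFunc.algebraMap_C c).symm
  rw [hq, hC, hC, ← map_pow, ← map_mul] at h
  have h2 := RatFunc.algebraMap_injective kk h
  have hz : tk ^ z ≠ 0 := zpow_ne_zero _ tk_ne_zero
  have := congrArg Polynomial.natDegree h2
  rw [Polynomial.natDegree_C, mul_comm, Polynomial.natDegree_C_mul_X_pow a _ hz] at this
  omega

variable {R : Type*} [CommSemiring R] {σ τ : Type*}

lemma my_eval_aeval (v : τ → R) (s : σ → MvPolynomial τ R) (p : MvPolynomial σ R) :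
    eval v (aeval s p) = eval (fun i => eval v (s i)) p := by
  induction p using MvPolynomial.induction_on with
  | C a => simp [aeval_C, algebraMap_eq]
  | add p q hp hq => simp only [map_add]; rw [hp, hq]
  | mul_X p i hp => simp only [map_mul, aeval_X, eval_X]; rw [hp]

lemma my_totalDegree_aeval_le (s : σ → MvPolynomial τ R) (hs : ∀ i, (s i).totalDegree ≤ 1)
    (p : MvPolynomial σ R) : (aeval s p).totalDegree ≤ p.totalDegree := by
  conv_lhs => rw [← support_sum_monomial_coeff p]
  rw [map_sum]
  refine (totalDegree_finset_sum _ _).trans ?_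
  refine Finset.sup_le fun m hm => ?_
  have h1 : (aeval s (monomial m (coeff m p))).totalDegree ≤ m.sum fun _ e => e := by
    rw [aeval_monomial]
    refine (totalDegree_mul _ _).trans ?_
    have h0 : (algebraMap R (MvPolynomial τ R) (coeff m p)).totalDegree = 0 := by
      rw [algebraMap_eq]; exact totalDegree_C _
    rw [h0, zero_add]
    refine (totalDegree_finset_prod _ _).trans ?_
    rw [Finsupp.sum]
    refine Finset.sum_le_sum fun i _ => ?_
    refine (totalDegree_pow _ _).trans ?_
    calc m i * (s i).totalDegree ≤ m i * 1 := Nat.mul_le_mul_left _ (hs i)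
    _ = m i := Nat.mul_one _
  exact h1.trans (le_totalDegree hm)

/-- `μ̂`: move the last part to the front and add 1. -/
def hatc {m : ℕ} (κ : Fin (m + 1) → ℕ) : Fin (m + 1) → ℕ :=
  Fin.cons (κ (Fin.last m) + 1) (fun j => κ j.castSucc)

/-- inverse of `hatc` (on compositions with positive first part). -/
def unhat {m : ℕ} (ν : Fin (m + 1) → ℕ) : Fin (m + 1) → ℕ :=
  Fin.snoc (fun j => ν j.succ) (ν 0 - 1)

lemma card_filter_eq_sum {n : ℕ} (p : Fin n → Prop) [DecidablePred p] :
    (Finset.univ.filter p).card = ∑ i, if p i then 1 else 0 := Finset.card_filter _ _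

lemma kStat_hatc_zero {m : ℕ} (κ : Fin (m + 1) → ℕ) :
    kStat (hatc κ) 0 = kStat κ (Fin.last m) := by
  unfold kStat
  rw [card_filter_eq_sum, card_filter_eq_sum, card_filter_eq_sum, card_filter_eq_sum]
  rw [Fin.sum_univ_succ, Fin.sum_univ_succ, Fin.sum_univ_castSucc, Fin.sum_univ_castSucc]
  simp only [hatc, Fin.cons_zero, Fin.cons_succ, Fin.succ_pos, Fin.castSucc_lt_last,
    lt_self_iff_false, Fin.not_lt_zero, false_and, if_false, true_and, and_true,
    Finset.sum_const_zero, zero_add, add_zero, Nat.add_one_le_iff]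
  simp [lt_asymm (Fin.castSucc_lt_last _)]

lemma kStat_hatc_succ {m : ℕ} (κ : Fin (m + 1) → ℕ) (j : Fin m) :
    kStat (hatc κ) j.succ = kStat κ j.castSucc := by
  unfold kStat
  rw [card_filter_eq_sum, card_filter_eq_sum, card_filter_eq_sum, card_filter_eq_sum]
  rw [Fin.sum_univ_succ, Fin.sum_univ_succ, Fin.sum_univ_castSucc, Fin.sum_univ_castSucc]
  simp only [hatc, Fin.cons_zero, Fin.cons_succ, Fin.succ_pos, Fin.castSucc_lt_last,
    Fin.succ_lt_succ_iff, Fin.castSucc_lt_castSucc_iff, (Fin.not_lt_zero _ : ¬ (Fin.succ j < 0)),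
    true_and, and_true, false_and, if_false, zero_add, add_zero, Nat.lt_succ_iff,
    lt_asymm (Fin.castSucc_lt_last _), Fin.succ_lt_succ_iff]
  omega

lemma kStat_zero_of_first_zero {m : ℕ} (ν : Fin (m + 1) → ℕ) (h : ν 0 = 0) :
    kStat ν 0 = m := by
  unfold kStat
  rw [card_filter_eq_sum, card_filter_eq_sum]
  rw [Fin.sum_univ_succ, Fin.sum_univ_succ]
  simp [h, Fin.succ_pos, (Fin.not_lt_zero (0 : Fin (m+1)) : ¬ ((0:Fin (m+1)) < 0))]

lemma kStat_cons_zero_succ {m : ℕ} (ν' : Fin m → ℕ) (j : Fin m) :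
    kStat (Fin.cons 0 ν' : Fin (m+1) → ℕ) j.succ = kStat ν' j := by
  unfold kStat
  rw [card_filter_eq_sum, card_filter_eq_sum, card_filter_eq_sum, card_filter_eq_sum]
  rw [Fin.sum_univ_succ, Fin.sum_univ_succ]
  simp [Fin.succ_lt_succ_iff, (Fin.not_lt_zero _ : ¬ (Fin.succ j < 0))]

lemma mubar_hatc_zero {m : ℕ} (κ : Fin (m + 1) → ℕ) :
    mubar (hatc κ) 0 = qK * mubar κ (Fin.last m) := by
  unfold mubar
  rw [kStat_hatc_zero]
  have : hatc κ 0 = κ (Fin.last m) + 1 := rfl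
  rw [this, pow_succ]
  ring

lemma mubar_hatc_succ {m : ℕ} (κ : Fin (m + 1) → ℕ) (j : Fin m) :
    mubar (hatc κ) j.succ = mubar κ j.castSucc := by
  unfold mubar
  rw [kStat_hatc_succ]
  have : hatc κ j.succ = κ j.castSucc := rfl
  rw [this]

lemma mubar_cons_zero_succ {m : ℕ} (ν' : Fin m → ℕ) (j : Fin m) :
    mubar (Fin.cons 0 ν' : Fin (m+1) → ℕ) j.succ = mubar ν' j := by
  unfold mubar
  rw [kStat_cons_zero_succ]
  have : (Fin.cons 0 ν' : Fin (m+1) → ℕ) j.succ = ν' j := rfl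
  rw [this]

lemma mubar_zero_of_first_zero {m : ℕ} (ν : Fin (m + 1) → ℕ) (h : ν 0 = 0) :
    mubar ν 0 = tK ^ (-(m:ℤ)) := by
  unfold mubar
  rw [kStat_zero_of_first_zero ν h, h, pow_zero, one_mul]

lemma mubar_zero_ne {m : ℕ} (ν : Fin (m + 1) → ℕ) (h : 1 ≤ ν 0) :
    mubar ν 0 ≠ tK ^ (-(m:ℤ)) :=
  qpow_t_ne (ν 0) _ _ h

lemma hatc_unhat {m : ℕ} (ν : Fin (m + 1) → ℕ) (h : 1 ≤ ν 0) : hatc (unhat ν) = ν := by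
  funext i
  refine Fin.cases ?_ (fun j => ?_) i
  · show unhat ν (Fin.last m) + 1 = ν 0
    show (Fin.snoc _ (ν 0 - 1) : Fin (m+1) → ℕ) (Fin.last m) + 1 = ν 0
    rw [Fin.snoc_last]; omega
  · show unhat ν j.castSucc = ν j.succ
    show (Fin.snoc (fun j => ν j.succ) _ : Fin (m+1) → ℕ) j.castSucc = ν j.succ
    rw [Fin.snoc_castSucc]

lemma unhat_hatc {m : ℕ} (κ : Fin (m + 1) → ℕ) : unhat (hatc κ) = κ := by
  funext i
  refine Fin.lastCases ?_ (fun j => ?_) i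
  · show (Fin.snoc _ (hatc κ 0 - 1) : Fin (m+1) → ℕ) (Fin.last m) = κ (Fin.last m)
    rw [Fin.snoc_last]
    show κ (Fin.last m) + 1 - 1 = _
    omega
  · show (Fin.snoc (fun j => hatc κ j.succ) _ : Fin (m+1) → ℕ) j.castSucc = κ j.castSucc
    rw [Fin.snoc_castSucc]
    rfl

lemma hatc_zero_pos {m : ℕ} (κ : Fin (m + 1) → ℕ) : 1 ≤ hatc κ 0 := by
  show 1 ≤ κ (Fin.last m) + 1
  omega

lemma wt_hatc {m : ℕ} (κ : Fin (m + 1) → ℕ) : wt (hatc κ) = wt κ + 1 := by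
  unfold wt
  rw [Fin.sum_univ_succ, Fin.sum_univ_castSucc (f := κ)]
  have : hatc κ 0 = κ (Fin.last m) + 1 := rfl
  rw [this]
  have : ∀ j : Fin m, hatc κ j.succ = κ j.castSucc := fun j => rfl
  simp only [this]
  omega

lemma wt_cons_zero {m : ℕ} (ν' : Fin m → ℕ) : wt (Fin.cons 0 ν' : Fin (m+1) → ℕ) = wt ν' := by
  unfold wt
  rw [Fin.sum_univ_succ]
  simp

lemma mubar_hatc (m : ℕ) (κ : Fin (m + 1) → ℕ) :
    mubar (hatc κ) = Fin.cons (qK * mubar κ (Fin.last m)) (fun j => mubar κ j.castSucc) := by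
  funext i
  refine Fin.cases ?_ (fun j => ?_) i
  · rw [Fin.cons_zero]; exact mubar_hatc_zero κ
  · rw [Fin.cons_succ]; exact mubar_hatc_succ κ j

lemma mubar_cons_zero (m : ℕ) (ν' : Fin m → ℕ) :
    mubar (Fin.cons 0 ν' : Fin (m+1) → ℕ) = Fin.cons (tK ^ (-(m:ℤ))) (mubar ν') := by
  funext i
  refine Fin.cases ?_ (fun j => ?_) i
  · rw [Fin.cons_zero]; exact mubar_zero_of_first_zero _ rfl
  · rw [Fin.cons_succ]; exact mubar_cons_zero_succ ν' j

/-- The cyclic rotation `0 ↦ last`, `succ j ↦ castSucc j` of `Fin (N+1)`, inverse of `eSh`. -/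
def eShInv (N : ℕ) : Fin (N + 1) → Fin (N + 1) := Fin.cases (Fin.last N) Fin.castSucc

/-- The cyclic rotation `last ↦ 0`, `castSucc j ↦ succ j` of `Fin (N+1)`. -/
def eSh (N : ℕ) : Fin (N + 1) ≃ Fin (N + 1) where
  toFun := Fin.lastCases 0 Fin.succ
  invFun := eShInv N
  left_inv := by
    intro i
    refine Fin.lastCases ?_ (fun j => ?_) i
    · simp [eShInv]
    · simp [eShInv]
  right_inv := by
    intro i
    refine Fin.cases ?_ (fun j => ?_) i
    · simp [eShInv]
    · simp [eShInv]

lemma eSh_last (N : ℕ) : eSh N (Fin.last N) = 0 := by simp [eSh]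
lemma eSh_castSucc (N : ℕ) (j : Fin N) : eSh N j.castSucc = j.succ := by simp [eSh]

/-- Scalars for the backward substitution. -/
def aB (N : ℕ) : Fin (N + 1) → KK := Fin.lastCases qK⁻¹ (fun _ => 1)

lemma aB_last (N : ℕ) : aB N (Fin.last N) = qK⁻¹ := by simp [aB]
lemma aB_castSucc (N : ℕ) (j : Fin N) : aB N j.castSucc = 1 := by simp [aB]

/-- The backward substitution (as in the theorem statement). -/
def subB (N : ℕ) : Fin (N + 1) → MvPolynomial (Fin (N + 1)) KK :=
  Fin.lastCases (C qK⁻¹ * X 0) (fun j : Fin N => X j.succ)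

lemma subB_last (N : ℕ) : subB N (Fin.last N) = C qK⁻¹ * X 0 := by simp [subB]
lemma subB_castSucc (N : ℕ) (j : Fin N) : subB N j.castSucc = X j.succ := by simp [subB]

/-- The forward substitution. -/
def subF (N : ℕ) : Fin (N + 1) → MvPolynomial (Fin (N + 1)) KK :=
  Fin.cases (C qK * X (Fin.last N)) (fun j : Fin N => X j.castSucc)

lemma subF_zero (N : ℕ) : subF N 0 = C qK * X (Fin.last N) := rfl
lemma subF_succ (N : ℕ) (j : Fin N) : subF N j.succ = X j.castSucc := rfl

lemma subB_eq (N : ℕ) : subB N = fun j => C (aB N j) * X (eSh N j) := by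
  funext j
  refine Fin.lastCases ?_ (fun i => ?_) j
  · rw [subB_last, aB_last, eSh_last]
  · rw [subB_castSucc, aB_castSucc, eSh_castSucc, C_1, one_mul]

lemma totalDegree_subB_le (N : ℕ) (i : Fin (N + 1)) : (subB N i).totalDegree ≤ 1 := by
  refine Fin.lastCases ?_ (fun j => ?_) i
  · rw [subB_last]
    refine (totalDegree_mul _ _).trans ?_
    simp [totalDegree_C, totalDegree_X]
  · rw [subB_castSucc]
    simp [totalDegree_X]

lemma totalDegree_subF_le (N : ℕ) (i : Fin (N + 1)) : (subF N i).totalDegree ≤ 1 := by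
  refine Fin.cases ?_ (fun j => ?_) i
  · rw [subF_zero]
    refine (totalDegree_mul _ _).trans ?_
    simp [totalDegree_C, totalDegree_X]
  · rw [subF_succ]
    simp [totalDegree_X]

lemma aeval_subB_subF (N : ℕ) (p : MvPolynomial (Fin (N + 1)) KK) :
    aeval (subB N) (aeval (subF N) p) = p := by
  have key : (aeval (subB N)).comp (aeval (subF N)) =
      (AlgHom.id KK (MvPolynomial (Fin (N + 1)) KK)) := by
    apply MvPolynomial.algHom_ext
    intro i
    refine Fin.cases ?_ (fun j => ?_) i
    · simp only [AlgHom.comp_apply, aeval_X, AlgHom.id_apply, subF_zero]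
      rw [map_mul, aeval_C, aeval_X, subB_last]
      rw [algebraMap_eq, ← mul_assoc, ← C_mul, mul_inv_cancel₀ qK_ne_zero, C_1, one_mul]
    · simp only [AlgHom.comp_apply, aeval_X, AlgHom.id_apply, subF_succ]
      exact subB_castSucc N j
  calc aeval (subB N) (aeval (subF N) p)
      = ((aeval (subB N)).comp (aeval (subF N))) p := rfl
    _ = p := by rw [key]; rfl

lemma eval_aeval_subF (N : ℕ) (κ : Fin (N + 1) → ℕ) (p : MvPolynomial (Fin (N + 1)) KK) :
    eval (mubar κ) (aeval (subF N) p) = eval (mubar (hatc κ)) p := by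
  rw [my_eval_aeval]
  have key : (fun i => eval (mubar κ) (subF N i)) = mubar (hatc κ) := by
    funext i
    refine Fin.cases ?_ (fun j => ?_) i
    · rw [subF_zero, mubar_hatc_zero]
      simp
    · rw [subF_succ, mubar_hatc_succ]
      simp
  rw [key]

lemma eval_aeval_subB (N : ℕ) (κ : Fin (N + 1) → ℕ) (p : MvPolynomial (Fin (N + 1)) KK) :
    eval (mubar (hatc κ)) (aeval (subB N) p) = eval (mubar κ) p := by
  rw [my_eval_aeval]
  have key : (fun i => eval (mubar (hatc κ)) (subB N i)) = mubar κ := by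
    funext i
    refine Fin.lastCases ?_ (fun j => ?_) i
    · rw [subB_last]
      rw [eval_mul, eval_C, eval_X, mubar_hatc_zero, ← mul_assoc,
        inv_mul_cancel₀ qK_ne_zero, one_mul]
    · rw [subB_castSucc, eval_X, mubar_hatc_succ]
  rw [key]

lemma coeff_aeval_subB (N : ℕ) (p : MvPolynomial (Fin (N + 1)) KK) (m : Fin (N + 1) →₀ ℕ) :
    coeff (Finsupp.mapDomain (eSh N) m) (aeval (subB N) p) =
      qK⁻¹ ^ (m (Fin.last N)) * coeff m p := by
  conv_lhs => rw [← support_sum_monomial_coeff p]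
  rw [map_sum]
  have key : ∀ m' : Fin (N + 1) →₀ ℕ, ∀ c : KK, aeval (subB N) (monomial m' c) =
      monomial (Finsupp.mapDomain (eSh N) m') (qK⁻¹ ^ (m' (Fin.last N)) * c) := by
    intro m' c
    rw [aeval_monomial, subB_eq]
    have h1 : (m'.prod fun i k => (C (aB N i) * X (eSh N i) : MvPolynomial (Fin (N+1)) KK) ^ k)
        = C (m'.prod fun i k => aB N i ^ k) *
          ((Finsupp.mapDomain (eSh N) m').prod
            fun i k => (X i : MvPolynomial (Fin (N+1)) KK) ^ k) := by
      rw [Finsupp.prod_mapDomain_index_inj (eSh N).injective]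
      rw [Finsupp.prod_congr (g2 := fun i k =>
        (C (aB N i) ^ k : MvPolynomial (Fin (N+1)) KK) * X (eSh N i) ^ k)
        (fun i _ => mul_pow _ _ _)]
      rw [Finsupp.prod_mul]
      congr 1
      rw [map_finsuppProd]
      exact Finsupp.prod_congr (fun i _ => by rw [map_pow])
    rw [h1]
    have h2 : (m'.prod fun i k => aB N i ^ k) = qK⁻¹ ^ (m' (Fin.last N)) := by
      rw [Finsupp.prod_fintype _ _ (fun i => pow_zero _)]
      rw [Fin.prod_univ_castSucc]
      simp only [aB_castSucc, one_pow, Finset.prod_const_one, one_mul, aB_last]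
    rw [h2, monomial_eq, algebraMap_eq, C_mul]
    ring
  rw [Finset.sum_congr rfl (fun m' _ => key m' (coeff m' p))]
  rw [coeff_sum]
  rw [Finset.sum_eq_single m]
  · rw [coeff_monomial, if_pos rfl]
  · intro m' _ hne
    rw [coeff_monomial, if_neg]
    exact fun h => hne (Finsupp.mapDomain_injective (eSh N).injective h.symm).symm
  · intro hm
    rw [coeff_monomial, if_pos rfl, notMem_support_iff.mp hm, mul_zero]

/-! ### Division by `x₀ - c` -/

/-- Evaluation of the `finSuccEquiv` image at the constant `c` (setting `x₀ := c`). -/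
def resZero {N : ℕ} (c : KK) (f : MvPolynomial (Fin (N + 1)) KK) : MvPolynomial (Fin N) KK :=
  Polynomial.eval (C c) (finSuccEquiv KK N f)

lemma eval_resZero {N : ℕ} (c : KK) (f : MvPolynomial (Fin (N + 1)) KK) (v : Fin N → KK) :
    eval v (resZero c f) = eval (Fin.cons c v) f := by
  rw [eval_eq_eval_mv_eval', resZero]
  rw [Polynomial.eval, Polynomial.hom_eval₂ _ (RingHom.id _) (eval v) (C c)]
  rw [Polynomial.eval_map]
  simp [RingHom.comp_id]

lemma totalDegree_resZero_le {N : ℕ} (c : KK) (f : MvPolynomial (Fin (N + 1)) KK) :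
    (resZero c f).totalDegree ≤ f.totalDegree := by
  rw [resZero, Polynomial.eval_eq_sum, Polynomial.sum]
  refine (totalDegree_finset_sum _ _).trans ?_
  refine Finset.sup_le fun i hi => ?_
  refine (totalDegree_mul _ _).trans ?_
  have h1 : ((C c : MvPolynomial (Fin N) KK) ^ i).totalDegree = 0 := by
    rw [← C_pow, totalDegree_C]
  rw [h1, add_zero]
  have h2 := totalDegree_coeff_finSuccEquiv_add_le f i (by
    simpa [Polynomial.mem_support_iff] using hi)
  omega

lemma coeff_resZero {N : ℕ} (c : KK) (f : MvPolynomial (Fin (N + 1)) KK) (d : ℕ)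
    (hdeg : f.totalDegree ≤ d) (m' : Fin N →₀ ℕ) (hm' : (m'.sum fun _ e => e) = d) :
    coeff m' (resZero c f) = coeff (m'.cons 0) f := by
  rw [resZero, Polynomial.eval_eq_sum, Polynomial.sum]
  rw [coeff_sum]
  have key : ∀ i, i ≠ 0 → coeff m' ((finSuccEquiv KK N f).coeff i * (C c) ^ i) = 0 := by
    intro i hi
    rw [← C_pow, mul_comm, coeff_C_mul, finSuccEquiv_coeff_coeff]
    have : coeff (m'.cons i) f = 0 := by
      by_contra hne
      have := le_totalDegree (p := f) (s := m'.cons i) (by rwa [mem_support_iff])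
      rw [Finsupp.sum_cons] at this
      omega
    rw [this, mul_zero]
  by_cases h0 : (0 : ℕ) ∈ (finSuccEquiv KK N f).support
  · rw [Finset.sum_eq_single 0]
    · rw [← C_pow, mul_comm, coeff_C_mul, finSuccEquiv_coeff_coeff, pow_zero, one_mul]
    · intro i _ hi; exact key i hi
    · intro h; exact absurd h0 h
  · have hz : (finSuccEquiv KK N f).coeff 0 = 0 := by
      by_contra hne
      exact h0 (Polynomial.mem_support_iff.mpr hne)
    have : coeff (m'.cons 0) f = 0 := by
      rw [← finSuccEquiv_coeff_coeff, hz, coeff_zero]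
    rw [this]
    refine Finset.sum_eq_zero fun i hi => ?_
    have hi0 : i ≠ 0 := fun h => h0 (h ▸ hi)
    exact key i hi0

lemma factor_of_resZero_eq_zero {N : ℕ} (c : KK) (f : MvPolynomial (Fin (N + 1)) KK)
    (h : resZero c f = 0) :
    ∃ g : MvPolynomial (Fin (N + 1)) KK, f = (X 0 - C c) * g := by
  have hroot : Polynomial.IsRoot (finSuccEquiv KK N f) (C c) := h
  obtain ⟨G, hG⟩ := (Polynomial.dvd_iff_isRoot.mpr hroot)
  refine ⟨(finSuccEquiv KK N).symm G, ?_⟩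
  have := congrArg (finSuccEquiv KK N).symm hG
  rw [AlgEquiv.symm_apply_apply] at this
  rw [this, map_mul, map_sub]
  congr 2
  · exact (finSuccEquiv KK N).injective (by rw [AlgEquiv.apply_symm_apply, finSuccEquiv_X_zero])
  · exact RingHom.congr_fun (MvPolynomial.finSuccEquiv_comp_C_eq_C (R := KK) N) c

lemma totalDegree_factor {N : ℕ} (c : KK) (g : MvPolynomial (Fin (N + 1)) KK) (d : ℕ)
    (hg : g ≠ 0) (hdeg : ((X 0 - C c) * g).totalDegree ≤ d) : g.totalDegree + 1 ≤ d := by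
  have hsupp : g.support.Nonempty := by
    rwa [Finset.nonempty_iff_ne_empty, ne_eq, support_eq_empty]
  obtain ⟨m, hm, hmax⟩ := Finset.exists_mem_eq_sup g.support hsupp (fun s => s.sum fun _ e => e)
  have hc : coeff (Finsupp.single 0 1 + m) ((X 0 - C c) * g) = coeff m g := by
    rw [sub_mul, coeff_sub, coeff_X_mul, coeff_C_mul]
    have : coeff (Finsupp.single 0 1 + m) g = 0 := by
      by_contra hne
      have := le_totalDegree (p := g) (s := Finsupp.single 0 1 + m) (by rwa [mem_support_iff])
      rw [Finsupp.sum_add_index (by simp) (by simp)] at this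
      rw [Finsupp.sum_single_index (by simp)] at this
      rw [totalDegree, hmax] at this
      omega
    rw [this, mul_zero, sub_zero]
  have hne : coeff (Finsupp.single 0 1 + m) ((X 0 - C c) * g) ≠ 0 := by
    rw [hc]; rwa [← mem_support_iff]
  have := le_totalDegree (p := (X 0 - C c) * g) (s := Finsupp.single 0 1 + m)
    (by rwa [mem_support_iff])
  rw [Finsupp.sum_add_index (by simp) (by simp)] at this
  rw [Finsupp.sum_single_index (by simp)] at this
  rw [totalDegree, hmax]
  omega

/-! ### `toMono` helpers -/

lemma toMono_apply {n : ℕ} (μ : Fin n → ℕ) (i : Fin n) : toMono μ i = μ i := rfl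

lemma sum_toMono {n : ℕ} (μ : Fin n → ℕ) : ((toMono μ).sum fun _ e => e) = wt μ := by
  rw [Finsupp.sum_fintype _ _ (fun i => rfl)]
  rfl

lemma toMono_cons {m : ℕ} (a : ℕ) (ν' : Fin m → ℕ) :
    toMono (Fin.cons a ν' : Fin (m+1) → ℕ) = (toMono ν').cons a := by
  ext i
  refine Fin.cases ?_ (fun j => ?_) i
  · rw [Finsupp.cons_zero]; rfl
  · rw [Finsupp.cons_succ]; rfl

lemma le_totalDegree_of_coeff_ne {n : ℕ} (f : MvPolynomial (Fin n) KK) (μ : Fin n → ℕ)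
    (h : coeff (toMono μ) f ≠ 0) : wt μ ≤ f.totalDegree := by
  have := le_totalDegree (p := f) (s := toMono μ) (by rwa [mem_support_iff])
  rwa [sum_toMono] at this

lemma mapDomain_eSh_toMono {m : ℕ} (μ : Fin (m + 1) → ℕ) (h : 1 ≤ μ 0) :
    Finsupp.mapDomain (eSh m) (toMono (unhat μ)) =
      toMono (Fin.cons (μ 0 - 1) (fun j => μ j.succ) : Fin (m+1) → ℕ) := by
  ext i
  rw [Finsupp.mapDomain_equiv_apply]
  refine Fin.cases ?_ (fun j => ?_) i
  · have h0 : (eSh m).symm 0 = Fin.last m := rfl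
    rw [h0, toMono_apply, toMono_apply, Fin.cons_zero]
    show (Fin.snoc (fun j => μ j.succ) (μ 0 - 1) : Fin (m+1) → ℕ) (Fin.last m) = μ 0 - 1
    rw [Fin.snoc_last]
  · have hj : (eSh m).symm j.succ = j.castSucc := rfl
    rw [hj, toMono_apply, toMono_apply, Fin.cons_succ]
    show (Fin.snoc (fun j => μ j.succ) (μ 0 - 1) : Fin (m+1) → ℕ) j.castSucc = μ j.succ
    rw [Fin.snoc_castSucc]

lemma single_add_toMono {m : ℕ} (μ : Fin (m + 1) → ℕ) (h : 1 ≤ μ 0) :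
    Finsupp.single 0 1 + toMono (Fin.cons (μ 0 - 1) (fun j => μ j.succ) : Fin (m+1) → ℕ)
      = toMono μ := by
  ext i
  rw [Finsupp.add_apply]
  refine Fin.cases ?_ (fun j => ?_) i
  · rw [Finsupp.single_apply, if_pos rfl, toMono_apply, toMono_apply, Fin.cons_zero]
    omega
  · rw [Finsupp.single_apply, if_neg (Fin.succ_ne_zero j).symm, toMono_apply, toMono_apply,
      Fin.cons_succ, zero_add]

lemma wt_zero_comp {n : ℕ} : wt (fun _ => 0 : Fin n → ℕ) = 0 := by simp [wt]

/-! ### The key vanishing lemmas -/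

lemma vanish_lemmas : ∀ N : ℕ,
    (∀ n d : ℕ, n + d ≤ N → ∀ f : MvPolynomial (Fin n) KK, f.totalDegree ≤ d →
      (∀ ν : Fin n → ℕ, wt ν ≤ d → eval (mubar ν) f = 0) → f = 0) ∧
    (∀ n d : ℕ, n + d ≤ N → ∀ μ : Fin n → ℕ, wt μ = d →
      ∀ f : MvPolynomial (Fin n) KK, f.totalDegree ≤ d → coeff (toMono μ) f = 0 →
      (∀ ν : Fin n → ℕ, ν ≠ μ → wt ν ≤ d → eval (mubar ν) f = 0) → f = 0) := by
  intro N
  induction N using Nat.strong_induction_on with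
  | _ N IH =>
  constructor
  · -- Lemma L
    intro n d hN f hdeg hvan
    match n, hN with
    | 0, hN =>
      rw [eq_C_of_isEmpty f]
      rw [eq_C_of_isEmpty f] at hvan
      have := hvan (fun i => i.elim0) (by simp [wt])
      rw [eval_C] at this
      rw [this, map_zero]
    | (m+1), hN =>
      set c : KK := tK ^ (-(m:ℤ)) with hc
      have hres : resZero c f = 0 := by
        refine (IH (N-1) (by omega)).1 m d (by omega) _
          ((totalDegree_resZero_le c f).trans hdeg) ?_
        intro κ hκ
        rw [eval_resZero]
        have h1 : Fin.cons c (mubar κ) = mubar (Fin.cons 0 κ : Fin (m+1) → ℕ) :=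
          (mubar_cons_zero m κ).symm
        rw [h1]
        exact hvan _ (by rw [wt_cons_zero]; exact hκ)
      obtain ⟨g, hfg⟩ := factor_of_resZero_eq_zero c f hres
      by_cases hg : g = 0
      · rw [hfg, hg, mul_zero]
      · exfalso
        have hdg : g.totalDegree + 1 ≤ d := totalDegree_factor c g d hg (hfg ▸ hdeg)
        have hgvan : ∀ κ : Fin (m+1) → ℕ, wt κ ≤ d - 1 → eval (mubar (hatc κ)) g = 0 := by
          intro κ hκ
          have hf0 : eval (mubar (hatc κ)) f = 0 :=
            hvan _ (by rw [wt_hatc]; omega)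
          rw [hfg, eval_mul, eval_sub, eval_X, eval_C] at hf0
          rcases mul_eq_zero.mp hf0 with h | h
          · exact absurd (sub_eq_zero.mp h) (mubar_zero_ne _ (hatc_zero_pos κ))
          · exact h
        have hg' : aeval (subF m) g = 0 := by
          refine (IH (N-1) (by omega)).1 (m+1) (d-1) (by omega) _
            ((my_totalDegree_aeval_le _ (totalDegree_subF_le m) g).trans (by omega)) ?_
          intro κ hκ
          rw [eval_aeval_subF]
          exact hgvan κ hκ
        have : g = 0 := by
          have := congrArg (aeval (subB m)) hg'
          rwa [aeval_subB_subF, map_zero] at this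
        exact hg this
  · -- Lemma L'
    intro n d hN μ hμ f hdeg hcoeff hvan
    match n, hN with
    | 0, hN =>
      rw [eq_C_of_isEmpty f]
      have : toMono μ = 0 := by ext i; exact i.elim0
      rw [eq_C_of_isEmpty f, this, coeff_zero_C] at hcoeff
      rw [hcoeff, map_zero]
    | (m+1), hN =>
      set c : KK := tK ^ (-(m:ℤ)) with hc
      by_cases hμ0 : 1 ≤ μ 0
      · -- first part of μ is positive
        have hres : resZero c f = 0 := by
          refine (IH (N-1) (by omega)).1 m d (by omega) _
            ((totalDegree_resZero_le c f).trans hdeg) ?_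
          intro κ hκ
          rw [eval_resZero]
          rw [show Fin.cons c (mubar κ) = mubar (Fin.cons 0 κ : Fin (m+1) → ℕ) from
            (mubar_cons_zero m κ).symm]
          refine hvan _ ?_ (by rw [wt_cons_zero]; exact hκ)
          intro hEq
          have : μ 0 = 0 := by rw [← hEq, Fin.cons_zero]
          omega
        obtain ⟨g, hfg⟩ := factor_of_resZero_eq_zero c f hres
        by_cases hg : g = 0
        · rw [hfg, hg, mul_zero]
        · exfalso
          have hdg : g.totalDegree + 1 ≤ d := totalDegree_factor c g d hg (hfg ▸ hdeg)
          -- coefficient condition for g'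
          have hcg : coeff (toMono (Fin.cons (μ 0 - 1) (fun j => μ j.succ) : Fin (m+1) → ℕ)) g
              = 0 := by
            have h1 : coeff (toMono μ) f =
                coeff (toMono (Fin.cons (μ 0 - 1) (fun j => μ j.succ) : Fin (m+1) → ℕ)) g := by
              rw [hfg, sub_mul, coeff_sub, ← single_add_toMono μ hμ0, coeff_X_mul, coeff_C_mul]
              have hz : coeff (Finsupp.single 0 1 +
                  toMono (Fin.cons (μ 0 - 1) (fun j => μ j.succ) : Fin (m+1) → ℕ)) g = 0 := by
                by_contra hne
                have := le_totalDegree (p := g)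
                  (s := Finsupp.single 0 1 + toMono (Fin.cons (μ 0 - 1) _)) (by
                    rwa [mem_support_iff])
                rw [single_add_toMono μ hμ0, sum_toMono, hμ] at this
                omega
              rw [hz, mul_zero, sub_zero]
            rw [← h1, hcoeff]
          set g' : MvPolynomial (Fin (m+1)) KK := aeval (subF m) g with hg'def
          have hgg' : g = aeval (subB m) g' := (aeval_subB_subF m g).symm
          have hcg' : coeff (toMono (unhat μ)) g' = 0 := by
            have := coeff_aeval_subB m g' (toMono (unhat μ))
            rw [← hgg', mapDomain_eSh_toMono μ hμ0, hcg] at this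
            have hq : (qK⁻¹ : KK) ^ ((toMono (unhat μ)) (Fin.last m)) ≠ 0 :=
              pow_ne_zero _ (inv_ne_zero qK_ne_zero)
            exact (mul_eq_zero.mp this.symm).resolve_left hq
          have hwun : wt (unhat μ) = d - 1 := by
            have := wt_hatc (unhat μ)
            rw [hatc_unhat μ hμ0] at this
            omega
          have hg'van : ∀ κ : Fin (m+1) → ℕ, κ ≠ unhat μ → wt κ ≤ d - 1 →
              eval (mubar κ) g' = 0 := by
            intro κ hκne hκ
            rw [hg'def, eval_aeval_subF]
            have hf0 : eval (mubar (hatc κ)) f = 0 := by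
              refine hvan _ ?_ (by rw [wt_hatc]; omega)
              intro hEq
              exact hκne (by rw [← unhat_hatc κ, hEq, ← hatc_unhat μ hμ0, unhat_hatc])
            rw [hfg, eval_mul, eval_sub, eval_X, eval_C] at hf0
            rcases mul_eq_zero.mp hf0 with h | h
            · exact absurd (sub_eq_zero.mp h) (mubar_zero_ne _ (hatc_zero_pos κ))
            · exact h
          have : g' = 0 := by
            refine (IH (N-1) (by omega)).2 (m+1) (d-1) (by omega) (unhat μ) hwun _
              ((my_totalDegree_aeval_le _ (totalDegree_subF_le m) g).trans (by omega))
              hcg' hg'van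
          rw [this, map_zero] at hgg'
          exact hg hgg'
      · -- first part of μ is zero
        have hμ00 : μ 0 = 0 := by omega
        set μ' : Fin m → ℕ := fun j => μ j.succ with hμ'def
        have hμsplit : μ = Fin.cons 0 μ' := by
          funext i
          refine Fin.cases ?_ (fun j => ?_) i
          · rw [Fin.cons_zero, hμ00]
          · rw [Fin.cons_succ]
        have hwtμ' : wt μ' = d := by
          rw [← hμ]
          unfold wt
          rw [Fin.sum_univ_succ, hμ00, zero_add]
        have hres : resZero c f = 0 := by
          refine (IH (N-1) (by omega)).2 m d (by omega) μ' hwtμ' _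
            ((totalDegree_resZero_le c f).trans hdeg) ?_ ?_
          · rw [coeff_resZero c f d hdeg (toMono μ') (by rw [sum_toMono, hwtμ'])]
            rw [← toMono_cons, ← hμsplit]
            exact hcoeff
          · intro κ hκne hκ
            rw [eval_resZero]
            rw [show Fin.cons c (mubar κ) = mubar (Fin.cons 0 κ : Fin (m+1) → ℕ) from
              (mubar_cons_zero m κ).symm]
            refine hvan _ ?_ (by rw [wt_cons_zero]; exact hκ)
            intro hEq
            apply hκne
            rw [hμsplit] at hEq
            funext j
            have := congrFun hEq j.succ
            rwa [Fin.cons_succ, Fin.cons_succ] at this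
        obtain ⟨g, hfg⟩ := factor_of_resZero_eq_zero c f hres
        by_cases hg : g = 0
        · rw [hfg, hg, mul_zero]
        · exfalso
          have hdg : g.totalDegree + 1 ≤ d := totalDegree_factor c g d hg (hfg ▸ hdeg)
          have hgvan : ∀ κ : Fin (m+1) → ℕ, wt κ ≤ d - 1 → eval (mubar (hatc κ)) g = 0 := by
            intro κ hκ
            have hf0 : eval (mubar (hatc κ)) f = 0 := by
              refine hvan _ ?_ (by rw [wt_hatc]; omega)
              intro hEq
              have h1 : 1 ≤ μ 0 := by rw [← hEq]; exact hatc_zero_pos κ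
              omega
            rw [hfg, eval_mul, eval_sub, eval_X, eval_C] at hf0
            rcases mul_eq_zero.mp hf0 with h | h
            · exact absurd (sub_eq_zero.mp h) (mubar_zero_ne _ (hatc_zero_pos κ))
            · exact h
          have hg' : aeval (subF m) g = 0 := by
            refine (IH (N-1) (by omega)).1 (m+1) (d-1) (by omega) _
              ((my_totalDegree_aeval_le _ (totalDegree_subF_le m) g).trans (by omega)) ?_
            intro κ hκ
            rw [eval_aeval_subF]
            exact hgvan κ hκ
          have : g = 0 := by
            have := congrArg (aeval (subB m)) hg'
            rwa [aeval_subB_subF, map_zero] at this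
          exact hg this

/-! ### Properties of the right-hand side -/

section RHS

variable (n : ℕ) (μ : Fin (n + 1) → ℕ) (E : MvPolynomial (Fin (n + 1)) KK)

/-- The right-hand side of the Knop–Sahi recurrence. -/
def ksRHS : MvPolynomial (Fin (n + 1)) KK :=
  (X 0 - C (tK ^ (-(n : ℤ)))) * C (qK ^ μ (Fin.last n)) * aeval (subB n) E

lemma ksRHS_totalDegree (hdeg : E.totalDegree ≤ wt μ) :
    (ksRHS n μ E).totalDegree ≤ wt μ + 1 := by
  unfold ksRHS
  refine (totalDegree_mul _ _).trans ?_
  have h1 : (X (0 : Fin (n+1)) - C (tK ^ (-(n : ℤ))) : MvPolynomial (Fin (n+1)) KK).totalDegree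
      ≤ 1 := by
    rw [sub_eq_add_neg, ← C_neg]
    refine (totalDegree_add _ _).trans ?_
    simp [totalDegree_X, totalDegree_C]
  have h2 : ((X (0:Fin (n+1)) - C (tK ^ (-(n : ℤ)))) * C (qK ^ μ (Fin.last n))).totalDegree
      ≤ 1 := by
    refine (totalDegree_mul _ _).trans ?_
    rw [totalDegree_C]
    omega
  have h3 := (my_totalDegree_aeval_le _ (totalDegree_subB_le n) E).trans hdeg
  omega

lemma ksRHS_coeff (hdeg : E.totalDegree ≤ wt μ) (hcoeff : coeff (toMono μ) E = 1) :
    coeff (toMono (hatc μ)) (ksRHS n μ E) = 1 := by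
  unfold ksRHS
  rw [mul_assoc, sub_mul, coeff_sub]
  have hpos : 1 ≤ hatc μ 0 := hatc_zero_pos μ
  -- identify the two monomial forms
  have hmap : Finsupp.mapDomain (eSh n) (toMono μ) =
      toMono (Fin.cons (hatc μ 0 - 1) (fun j => hatc μ j.succ) : Fin (n+1) → ℕ) := by
    have := mapDomain_eSh_toMono (hatc μ) hpos
    rwa [unhat_hatc] at this
  have hsingle : Finsupp.single 0 1 +
      toMono (Fin.cons (hatc μ 0 - 1) (fun j => hatc μ j.succ) : Fin (n+1) → ℕ)
      = toMono (hatc μ) := single_add_toMono (hatc μ) hpos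
  have hXterm : coeff (toMono (hatc μ))
      (X 0 * (C (qK ^ μ (Fin.last n)) * aeval (subB n) E)) = 1 := by
    rw [← hsingle, coeff_X_mul, coeff_C_mul, ← hmap, coeff_aeval_subB, hcoeff, mul_one]
    have : (toMono μ) (Fin.last n) = μ (Fin.last n) := rfl
    rw [this, inv_pow, mul_inv_cancel₀ (pow_ne_zero _ qK_ne_zero)]
  have hCterm : coeff (toMono (hatc μ))
      (C (tK ^ (-(n : ℤ))) * (C (qK ^ μ (Fin.last n)) * aeval (subB n) E)) = 0 := by
    rw [coeff_C_mul, coeff_C_mul]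
    have hz : coeff (toMono (hatc μ)) (aeval (subB n) E) = 0 := by
      by_contra hne
      have := le_totalDegree_of_coeff_ne _ _ hne
      have hd := (my_totalDegree_aeval_le _ (totalDegree_subB_le n) E).trans hdeg
      rw [wt_hatc] at this
      omega
    rw [hz, mul_zero, mul_zero]
  rw [hXterm, hCterm, sub_zero]

lemma ksRHS_vanish (hvan : ∀ ν : Fin (n+1) → ℕ, ν ≠ μ → wt ν ≤ wt μ → eval (mubar ν) E = 0)
    (ν : Fin (n + 1) → ℕ) (hne : ν ≠ hatc μ) (hwt : wt ν ≤ wt μ + 1) :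
    eval (mubar ν) (ksRHS n μ E) = 0 := by
  unfold ksRHS
  rw [eval_mul, eval_mul, eval_sub, eval_X, eval_C, eval_C]
  by_cases h0 : 1 ≤ ν 0
  · have hν : ν = hatc (unhat ν) := (hatc_unhat ν h0).symm
    have hE0 : eval (mubar ν) (aeval (subB n) E) = 0 := by
      rw [hν, eval_aeval_subB]
      refine hvan (unhat ν) ?_ ?_
      · intro hEq
        exact hne (by rw [hν, hEq])
      · have := wt_hatc (unhat ν)
        rw [hatc_unhat ν h0] at this
        omega
    rw [hE0, mul_zero]
  · have : ν 0 = 0 := by omega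
    rw [mubar_zero_of_first_zero ν this, sub_self, zero_mul, zero_mul]

end RHS

end Aux

/-- Knop–Sahi recurrence. The number of variables is `n + 1`, and
`μ̂ = (μₙ₊₁ + 1, μ₁, …, μₙ)` (with 1-based indexing as in the paper, the last part
moved to the front and increased by 1). -/
theorem knop_sahi_recurrence (n : ℕ) (μ : Fin (n + 1) → ℕ)
    (E E' : MvPolynomial (Fin (n + 1)) KK)
    (hE : IsIntE μ E)
    (hE' : IsIntE (Fin.cons (μ (Fin.last n) + 1) (fun i : Fin n => μ i.castSucc)) E') :
    E' = (X 0 - C (tK ^ (-(n : ℤ)))) * C (qK ^ μ (Fin.last n))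
        * (aeval (fun i : Fin (n + 1) =>
            (Fin.lastCases (C qK⁻¹ * X 0) (fun j : Fin n => X j.succ) i
              : MvPolynomial (Fin (n + 1)) KK))) E := by
  obtain ⟨hdeg, hcoeff, hvan⟩ := hE
  have hhatc : (Fin.cons (μ (Fin.last n) + 1) (fun i : Fin n => μ i.castSucc) :
      Fin (n+1) → ℕ) = hatc μ := rfl
  rw [hhatc] at hE'
  obtain ⟨hdeg', hcoeff', hvan'⟩ := hE'
  have hsub : (fun i : Fin (n + 1) =>
      (Fin.lastCases (C qK⁻¹ * X 0) (fun j : Fin n => X j.succ) i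
        : MvPolynomial (Fin (n + 1)) KK)) = subB n := by
    funext i; rfl
  rw [hsub]
  have hgoal : E' - ksRHS n μ E = 0 := by
    have hwth : wt (hatc μ) = wt μ + 1 := wt_hatc μ
    refine (vanish_lemmas ((n+1) + (wt μ + 1))).2 (n+1) (wt μ + 1) le_rfl (hatc μ)
      hwth _ ?_ ?_ ?_
    · rw [sub_eq_add_neg]
      refine (totalDegree_add _ _).trans ?_
      rw [totalDegree_neg]
      exact max_le (hwth ▸ hdeg') (ksRHS_totalDegree n μ E hdeg)
    · rw [coeff_sub, hcoeff', ksRHS_coeff n μ E hdeg hcoeff, sub_self]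
    · intro ν hne hwt
      rw [map_sub, hvan' ν hne (by omega), ksRHS_vanish n μ E hvan ν hne (by omega), sub_self]
  have := sub_eq_zero.mp hgoal
  rw [this]
  rfl
end
end
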